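/- Let S ≥ 4 be even and let π_ρ on the cycle {1,...,S} be given by π_ρ(x) ∝ 1 for x odd and π_ρ(x) ∝ ρ for x even, with 0 < ρ < 1. Consider the Guided Walk lifted chain on {1,...,S} × {−1,1}, proposing x → x+ξ on the cycle with Metropolis acceptance min(1, π_ρ(x+ξ)/π_ρ(x)) and flipping ξ on rejection. Then this chain is periodic with period 2: for every odd state k and every ξ ∈ {−1,1} and p ∈ ℕ, the probability of returning to (k,ξ) in an odd number 2p+1 of steps is 0, while the probability of being at (k,ξ) after some even number of steps is positive. In particular the chain is not ergodic: there exists an initial distribution μ such that ‖μ K^t − π̃‖ does not converge to 0. -/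

import Mathlib

open Finset

set_option linter.unusedSectionVars false

section GuidedWalkAux

variable {S : ℕ} [NeZero S] {ρ : ℝ} {pi : Fin S → ℝ}
  {K : Matrix (Fin S × Bool) (Fin S × Bool) ℝ}

/-- Parity of a lifted state: parity of position plus momentum bit. -/
private def par {S : ℕ} (p : Fin S × Bool) : ℕ := (p.1.val + cond p.2 1 0) % 2

private lemma val_add_one (hS : 4 ≤ S) (heven : S % 2 = 0) (x : Fin S) :
    (x + 1).val % 2 = (x.val + 1) % 2 := by
  have h2 : 2 ∣ S := Nat.dvd_of_mod_eq_zero heven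
  have e1 : (1 : Fin S).val = 1 := by
    rw [Fin.val_one']; exact Nat.mod_eq_of_lt (by omega)
  have : (x + 1).val = (x.val + 1) % S := by rw [Fin.add_def, e1]
  rw [this, Nat.mod_mod_of_dvd _ h2]

private lemma val_sub_one (hS : 4 ≤ S) (heven : S % 2 = 0) (x : Fin S) :
    (x - 1).val % 2 = (x.val + 1) % 2 := by
  have h2 : 2 ∣ S := Nat.dvd_of_mod_eq_zero heven
  have e1 : (1 : Fin S).val = 1 := by
    rw [Fin.val_one']; exact Nat.mod_eq_of_lt (by omega)
  have : (x - 1).val = (S - 1 + x.val) % S := by rw [Fin.sub_def, e1]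
  rw [this, Nat.mod_mod_of_dvd _ h2]
  omega

private lemma K_step (hS : 4 ≤ S) (heven : S % 2 = 0)
    (hKzero : ∀ (x : Fin S) (ζ : Bool) (p : Fin S × Bool),
      p ≠ ((if ζ then x + 1 else x - 1), ζ) → p ≠ (x, !ζ) → K (x, ζ) p = 0)
    (a q : Fin S × Bool) (hne : K a q ≠ 0) : par q = (par a + 1) % 2 := by
  obtain ⟨x, ζ⟩ := a
  by_cases h1 : q = ((if ζ then x + 1 else x - 1), ζ)
  · subst h1
    have ha := val_add_one hS heven x
    have hs := val_sub_one hS heven x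
    cases ζ <;> simp [par] <;> omega
  · by_cases h2 : q = (x, !ζ)
    · subst h2
      cases ζ <;> simp only [par, Bool.not_true, Bool.not_false, cond_true, cond_false] <;> omega
    · exact absurd (hKzero x ζ q h1 h2) hne

private lemma Kpow_par (hS : 4 ≤ S) (heven : S % 2 = 0)
    (hKzero : ∀ (x : Fin S) (ζ : Bool) (p : Fin S × Bool),
      p ≠ ((if ζ then x + 1 else x - 1), ζ) → p ≠ (x, !ζ) → K (x, ζ) p = 0)
    (t : ℕ) (a q : Fin S × Bool) (hne : (K ^ t) a q ≠ 0) : par q = (par a + t) % 2 := by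
  induction t generalizing q with
  | zero =>
    rw [pow_zero] at hne
    have : q = a := by
      by_contra h
      exact hne (Matrix.one_apply_ne (Ne.symm h))
    subst this
    have h2 : par q < 2 := Nat.mod_lt _ (by norm_num)
    omega
  | succ t ih =>
    rw [pow_succ, Matrix.mul_apply] at hne
    obtain ⟨b, -, hb⟩ := Finset.exists_ne_zero_of_sum_ne_zero hne
    obtain ⟨hb1, hb2⟩ := mul_ne_zero_iff.mp hb
    have e1 := ih b hb1
    have e2 := K_step hS heven hKzero b q hb2
    omega

private lemma pi_pos (hS : 4 ≤ S) (hρ0 : 0 < ρ)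
    (hpi : ∀ k : Fin S,
      pi k = (if k.val % 2 = 0 then 1 else ρ) / ((S : ℝ) / 2 * (1 + ρ))) (k : Fin S) :
    0 < pi k := by
  rw [hpi]
  have hS' : (4 : ℝ) ≤ (S : ℝ) := by exact_mod_cast hS
  apply div_pos
  · split <;> [norm_num; exact hρ0]
  · nlinarith

private lemma K_nonneg (hS : 4 ≤ S) (hρ0 : 0 < ρ)
    (hpi : ∀ k : Fin S,
      pi k = (if k.val % 2 = 0 then 1 else ρ) / ((S : ℝ) / 2 * (1 + ρ)))
    (hKacc : ∀ (x : Fin S) (ζ : Bool),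
      K (x, ζ) ((if ζ then x + 1 else x - 1), ζ) =
        min 1 (pi (if ζ then x + 1 else x - 1) / pi x))
    (hKflip : ∀ (x : Fin S) (ζ : Bool),
      K (x, ζ) (x, !ζ) = 1 - min 1 (pi (if ζ then x + 1 else x - 1) / pi x))
    (hKzero : ∀ (x : Fin S) (ζ : Bool) (p : Fin S × Bool),
      p ≠ ((if ζ then x + 1 else x - 1), ζ) → p ≠ (x, !ζ) → K (x, ζ) p = 0)
    (a q : Fin S × Bool) : 0 ≤ K a q := by
  obtain ⟨x, ζ⟩ := a
  have hr : 0 ≤ pi (if ζ then x + 1 else x - 1) / pi x :=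
    le_of_lt (div_pos (pi_pos hS hρ0 hpi _) (pi_pos hS hρ0 hpi _))
  by_cases h1 : q = ((if ζ then x + 1 else x - 1), ζ)
  · rw [h1, hKacc]; exact le_min zero_le_one hr
  · by_cases h2 : q = (x, !ζ)
    · rw [h2, hKflip]
      have := min_le_left (1:ℝ) (pi (if ζ then x + 1 else x - 1) / pi x); linarith
    · rw [hKzero x ζ q h1 h2]

private lemma Kpow_nonneg (hK : ∀ a q, 0 ≤ K a q) (t : ℕ) (a q : Fin S × Bool) :
    0 ≤ (K ^ t) a q := by
  induction t generalizing a q with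
  | zero => rw [pow_zero, Matrix.one_apply]; split <;> norm_num
  | succ t ih =>
    rw [pow_succ, Matrix.mul_apply]
    exact Finset.sum_nonneg fun b _ => mul_nonneg (ih a b) (hK b q)

private lemma ratio_odd (hS : 4 ≤ S) (heven : S % 2 = 0) (hρ0 : 0 < ρ)
    (hpi : ∀ k : Fin S,
      pi k = (if k.val % 2 = 0 then 1 else ρ) / ((S : ℝ) / 2 * (1 + ρ)))
    (x : Fin S) (hx : x.val % 2 = 0) (ζ : Bool) :
    pi (if ζ then x + 1 else x - 1) / pi x = ρ := by
  have hy : ¬ ((if ζ then x + 1 else x - 1) : Fin S).val % 2 = 0 := by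
    have ha := val_add_one hS heven x
    have hs := val_sub_one hS heven x
    cases ζ <;> simp <;> omega
  have hS' : (4 : ℝ) ≤ (S : ℝ) := by exact_mod_cast hS
  have hD : (S : ℝ) / 2 * (1 + ρ) ≠ 0 := by positivity
  rw [hpi, hpi, if_neg hy, if_pos hx]
  field_simp

private lemma K2_diag_pos (hS : 4 ≤ S) (heven : S % 2 = 0) (hρ0 : 0 < ρ) (hρ1 : ρ < 1)
    (hpi : ∀ k : Fin S,
      pi k = (if k.val % 2 = 0 then 1 else ρ) / ((S : ℝ) / 2 * (1 + ρ)))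
    (hKflip : ∀ (x : Fin S) (ζ : Bool),
      K (x, ζ) (x, !ζ) = 1 - min 1 (pi (if ζ then x + 1 else x - 1) / pi x))
    (hK : ∀ a q, 0 ≤ K a q)
    (x : Fin S) (hx : x.val % 2 = 0) (ζ : Bool) :
    0 < (K ^ 2) (x, ζ) (x, ζ) := by
  have h1 : K (x, ζ) (x, !ζ) = 1 - ρ := by
    rw [hKflip, ratio_odd hS heven hρ0 hpi x hx, min_eq_right hρ1.le]
  have h2 : K (x, !ζ) (x, ζ) = 1 - ρ := by
    have := hKflip x (!ζ)
    rw [Bool.not_not] at this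
    rw [this, ratio_odd hS heven hρ0 hpi x hx, min_eq_right hρ1.le]
  have key : (0:ℝ) < K (x, ζ) (x, !ζ) * K (x, !ζ) (x, ζ) := by
    rw [h1, h2]; nlinarith
  rw [pow_two, Matrix.mul_apply]
  calc (0:ℝ) < K (x, ζ) (x, !ζ) * K (x, !ζ) (x, ζ) := key
    _ ≤ ∑ b, K (x, ζ) b * K b (x, ζ) :=
      Finset.single_le_sum (f := fun b => K (x, ζ) b * K b (x, ζ))
        (fun b _ => mul_nonneg (hK _ _) (hK _ _)) (Finset.mem_univ (x, !ζ))

end GuidedWalkAux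


/-- the Guided Walk on the cycle {1,…,S} (S even, S ≥ 4) with
rugged target π_ρ(odd) ∝ 1, π_ρ(even) ∝ ρ (0 < ρ < 1) is 2-periodic and hence
not ergodic.  State k ∈ {1,…,S} is encoded by `i : Fin S` with `i.val = k − 1`,
so an odd state k corresponds to `i.val % 2 = 0`; momentum +1 is `true`, −1 is
`false`, and π̃(x,ξ) = π_ρ(x)/2 on the lifted space. -/
theorem guided_walk_periodic_not_ergodic (S : ℕ) (hS : 4 ≤ S) (heven : S % 2 = 0)
    [NeZero S] (ρ : ℝ) (hρ0 : 0 < ρ) (hρ1 : ρ < 1)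
    (pi : Fin S → ℝ)
    (hpi : ∀ k : Fin S,
      pi k = (if k.val % 2 = 0 then 1 else ρ) / ((S : ℝ) / 2 * (1 + ρ)))
    (K : Matrix (Fin S × Bool) (Fin S × Bool) ℝ)
    (hKacc : ∀ (x : Fin S) (ζ : Bool),
      K (x, ζ) ((if ζ then x + 1 else x - 1), ζ) =
        min 1 (pi (if ζ then x + 1 else x - 1) / pi x))
    (hKflip : ∀ (x : Fin S) (ζ : Bool),
      K (x, ζ) (x, !ζ) = 1 - min 1 (pi (if ζ then x + 1 else x - 1) / pi x))
    (hKzero : ∀ (x : Fin S) (ζ : Bool) (p : Fin S × Bool),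
      p ≠ ((if ζ then x + 1 else x - 1), ζ) → p ≠ (x, !ζ) → K (x, ζ) p = 0) :
    (∀ k : Fin S, k.val % 2 = 0 → ∀ (ζ : Bool) (p : ℕ),
        (K ^ (2 * p + 1)) (k, ζ) (k, ζ) = 0) ∧
    (∀ k : Fin S, k.val % 2 = 0 → ∀ (ζ : Bool) (p : ℕ),
        0 < (K ^ (2 * p)) (k, ζ) (k, ζ)) ∧
    (∃ μ : Fin S × Bool → ℝ, (∀ q, 0 ≤ μ q) ∧ (∑ q, μ q = 1) ∧
      ¬ Filter.Tendsto
          (fun t : ℕ => (1 / 2) * ∑ p : Fin S × Bool,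
            |(∑ q, μ q * (K ^ t) q p) - pi p.1 / 2|)
          Filter.atTop (nhds 0)) := by
  have hK0 : ∀ a q, 0 ≤ K a q := K_nonneg hS hρ0 hpi hKacc hKflip hKzero
  have hpar := Kpow_par hS heven hKzero
  refine ⟨?_, ?_, ?_⟩
  · intro k hk ζ p
    by_contra hne
    have hp := hpar (2 * p + 1) (k, ζ) (k, ζ) hne
    omega
  · intro k hk ζ p
    induction p with
    | zero => rw [Nat.mul_zero, pow_zero, Matrix.one_apply_eq]; norm_num
    | succ p ih =>
      have h2 := K2_diag_pos hS heven hρ0 hρ1 hpi hKflip hK0 k hk ζ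
      have he : 2 * (p + 1) = 2 * p + 2 := by ring
      rw [he, pow_add, Matrix.mul_apply]
      calc (0:ℝ) < (K ^ (2 * p)) (k, ζ) (k, ζ) * (K ^ 2) (k, ζ) (k, ζ) := mul_pos ih h2
        _ ≤ ∑ b, (K ^ (2 * p)) (k, ζ) b * (K ^ 2) b (k, ζ) :=
          Finset.single_le_sum (f := fun b => (K ^ (2 * p)) (k, ζ) b * (K ^ 2) b (k, ζ))
            (fun b _ => mul_nonneg (Kpow_nonneg hK0 _ _ _) (Kpow_nonneg hK0 _ _ _))
            (Finset.mem_univ (k, ζ))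
  · refine ⟨fun q => if q = ((0 : Fin S), true) then 1 else 0,
      fun q => by dsimp only; split <;> norm_num, by simp, ?_⟩
    intro h
    have hpi0 : 0 < pi 0 := pi_pos hS hρ0 hpi 0
    have hval : ∀ (t : ℕ) (p : Fin S × Bool),
        (∑ q, (if q = ((0 : Fin S), true) then (1:ℝ) else 0) * (K ^ t) q p)
          = (K ^ t) ((0 : Fin S), true) p := by
      intro t p
      rw [Finset.sum_eq_single ((0 : Fin S), true)]
      · simp
      · intro b _ hb; simp [hb]
      · intro hb; exact absurd (Finset.mem_univ _) hb
    have hbound : ∀ t : ℕ, pi 0 / 4 ≤ (1 / 2) * ∑ p : Fin S × Bool,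
        |(∑ q, (if q = ((0 : Fin S), true) then (1:ℝ) else 0) * (K ^ t) q p) - pi p.1 / 2| := by
      intro t
      set b : Bool := decide ((1 + t) % 2 = 0) with hb
      have h00 : ((0 : Fin S)).val = 0 := Fin.val_zero S
      have hw : (K ^ t) ((0 : Fin S), true) ((0 : Fin S), b) = 0 := by
        by_contra hne
        have hp := hpar t ((0 : Fin S), true) ((0 : Fin S), b) hne
        simp only [par, h00, cond_true] at hp
        by_cases hc : (1 + t) % 2 = 0
        · rw [hb] at hp
          simp [hc] at hp
          try omega
        · rw [hb] at hp
          simp [hc] at hp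
          try omega
      have hterm : |(∑ q, (if q = ((0 : Fin S), true) then (1:ℝ) else 0)
            * (K ^ t) q ((0 : Fin S), b)) - pi 0 / 2| = pi 0 / 2 := by
        rw [hval, hw, zero_sub, abs_neg, abs_of_nonneg (by linarith)]
      calc pi 0 / 4 = (1 / 2) * (pi 0 / 2) := by ring
        _ ≤ (1 / 2) * ∑ p : Fin S × Bool,
            |(∑ q, (if q = ((0 : Fin S), true) then (1:ℝ) else 0) * (K ^ t) q p) - pi p.1 / 2| := by
          apply mul_le_mul_of_nonneg_left _ (by norm_num)
          rw [← hterm]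
          exact Finset.single_le_sum
            (f := fun p : Fin S × Bool =>
              |(∑ q, (if q = ((0 : Fin S), true) then (1:ℝ) else 0) * (K ^ t) q p) - pi p.1 / 2|)
            (fun p _ => abs_nonneg _) (Finset.mem_univ ((0 : Fin S), b))
    obtain ⟨t, ht⟩ := (h.eventually_lt_const (by linarith : (0:ℝ) < pi 0 / 4)).exists
    have := hbound t
    simp only at ht
    linarith
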